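/- arXiv:1702.03835 — 3 statements merged into one kernel-verified Lean document; each statement's English description precedes it below -/
import Mathlib

section
/- Let K > 0 and z₀ ∈ ℂ with |z₀| ≤ 1 and z₀ ≠ -1. Define z(t) = ((1+z₀)e^{Kt} - (1-z₀)) / ((1+z₀)e^{Kt} + (1-z₀)). Then there exists a constant C > 0 such that |1 - z(t)| ≤ C e^{-Kt} for all t ≥ 0. -/
theorem exp_sync_estimate (K : ℝ) (hK : 0 < K) (z₀ : ℂ)
    (hz₀ : ‖z₀‖ ≤ 1) (hz₀' : z₀ ≠ -1)
    (z : ℝ → ℂ)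
    (hz : ∀ t : ℝ, z t =
      ((1 + z₀) * Complex.exp (K * t) - (1 - z₀)) /
      ((1 + z₀) * Complex.exp (K * t) + (1 - z₀))) :
    ∃ C : ℝ, 0 < C ∧ ∀ t : ℝ, 0 ≤ t →
      ‖1 - z t‖ ≤ C * Real.exp (-K * t) := by
  have h1 : (1 + z₀) ≠ 0 := by
    intro h
    apply hz₀'
    linear_combination h
  set a : ℝ := ‖1 + z₀‖ with ha_def
  have ha : 0 < a := by
    simpa [ha_def] using (norm_pos_iff.mpr h1)
  refine ⟨2 * ‖1 - z₀‖ / a + 1, by positivity, ?_⟩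
  intro t ht
  have hEr : Complex.exp ((K : ℂ) * t) = ((Real.exp (K * t) : ℝ) : ℂ) := by
    rw [Complex.ofReal_exp]
    norm_num
  set r : ℝ := Real.exp (K * t) with hr_def
  have hrpos : 0 < r := Real.exp_pos _
  set D : ℂ := (1 + z₀) * Complex.exp ((K : ℂ) * t) + (1 - z₀) with hD_def
  -- lower bound on |D|
  have hns : Complex.normSq z₀ ≤ 1 := by
    rw [← Complex.sq_norm z₀] at *
    nlinarith [norm_nonneg z₀]
  have hre : (((1 + z₀) * (r : ℂ)) * (starRingEnd ℂ) (1 - z₀)).re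
      = r * (1 - Complex.normSq z₀) := by
    simp [Complex.normSq_apply, Complex.mul_re, Complex.mul_im]
    ring
  have hsq : (a * r) ^ 2 ≤ (‖D‖) ^ 2 := by
    rw [Complex.sq_norm, hD_def, hEr, Complex.normSq_add, mul_pow,
      ← Complex.sq_norm, ← Complex.sq_norm (1 - z₀)]
    have h2 : ‖(1 + z₀) * (r : ℂ)‖ = a * r := by
      rw [norm_mul, Complex.norm_of_nonneg hrpos.le]
    rw [h2, hre]
    nlinarith [norm_nonneg (1 - z₀)]
  have hDabs : a * r ≤ ‖D‖ := by
    nlinarith [norm_nonneg D, mul_pos ha hrpos]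
  have hDpos : 0 < ‖D‖ := lt_of_lt_of_le (mul_pos ha hrpos) hDabs
  have hDne : D ≠ 0 := by
    intro h
    rw [h] at hDpos
    simp at hDpos
  -- 1 - z t = 2 (1 - z₀) / D
  have hval : 1 - z t = 2 * (1 - z₀) / D := by
    rw [hz t, hD_def]
    have hD' : (1 + z₀) * Complex.exp ((K : ℂ) * t) + (1 - z₀) ≠ 0 := hDne
    field_simp
    ring
  rw [hval, norm_div, norm_mul]
  have habs2 : ‖(2:ℂ)‖ = 2 := by norm_num
  rw [habs2]
  have hrinv : Real.exp (-K * t) = r⁻¹ := by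
    rw [hr_def, ← Real.exp_neg]
    norm_num
  rw [hrinv]
  rw [div_le_iff₀ hDpos]
  have key : (2 * ‖1 - z₀‖ / a) * r⁻¹ * (a * r)
      ≤ (2 * ‖1 - z₀‖ / a + 1) * r⁻¹ * ‖D‖ := by
    have h3 : (0:ℝ) ≤ (2 * ‖1 - z₀‖ / a) * r⁻¹ := by positivity
    have h4 : (2 * ‖1 - z₀‖ / a) * r⁻¹ * (a * r)
        ≤ (2 * ‖1 - z₀‖ / a) * r⁻¹ * ‖D‖ :=
      mul_le_mul_of_nonneg_left hDabs h3
    nlinarith [norm_nonneg D, hDpos, inv_pos.mpr hrpos]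
  have heq : (2 * ‖1 - z₀‖ / a) * r⁻¹ * (a * r)
      = 2 * ‖1 - z₀‖ := by
    field_simp
  linarith [key, heq ▸ key]
end

section
/- Let K > 0, z₀ ∈ ℂ with |z₀| ≤ 1 and z₀ ≠ -1, and set z(t) = ((1+z₀)e^{Kt} - (1-z₀)) / ((1+z₀)e^{Kt} + (1-z₀)). Then the denominator (1+z₀)e^{Kt} + (1-z₀) is nonzero for every t ≥ 0, so z is well defined on [0,∞). -/
theorem denominator_nonzero (K : ℝ) (hK : 0 < K) (z₀ : ℂ)
    (hz₀ : ‖z₀‖ ≤ 1) (hz₀' : z₀ ≠ -1) :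
    ∀ t : ℝ, 0 ≤ t → (1 + z₀) * Complex.exp (K * t) + (1 - z₀) ≠ 0 := by
  intro t ht h
  set E := Real.exp (K * t) with hEdef
  have hE : 1 ≤ E := Real.one_le_exp (by positivity)
  have hcast : Complex.exp (K * t) = (E : ℂ) := by
    rw [hEdef, Complex.ofReal_exp]
    norm_cast
  rw [hcast] at h
  have key : z₀ * ((E : ℂ) - 1) = -((E : ℂ) + 1) := by linear_combination h
  have habs : ‖z₀‖ * (E - 1) = E + 1 := by
    have := congrArg (‖·‖) key
    rw [norm_mul, norm_neg] at this
    have h1 : ‖(E : ℂ) - 1‖ = E - 1 := by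
      rw [show (E : ℂ) - 1 = ((E - 1 : ℝ) : ℂ) by push_cast; ring,
        Complex.norm_real, Real.norm_eq_abs, abs_of_nonneg (by linarith)]
    have h2 : ‖(E : ℂ) + 1‖ = E + 1 := by
      rw [show (E : ℂ) + 1 = ((E + 1 : ℝ) : ℂ) by push_cast; ring,
        Complex.norm_real, Real.norm_eq_abs, abs_of_nonneg (by linarith)]
    rw [h1, h2] at this
    exact this
  nlinarith [norm_nonneg z₀]
end

section
/- Let K > 0, z₀ ∈ ℂ with |z₀| ≤ 1 and z₀ ≠ -1, and let z(t) = ((1+z₀)e^{Kt} - (1-z₀)) / ((1+z₀)e^{Kt} + (1-z₀)). Then Re z(t) → 1 as t → ∞; in particular there exists T ≥ 0 such that Re z(t) ≥ 1/2 for all t ≥ T. -/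
open Filter Topology

theorem re_z_tendsto_one (K : ℝ) (hK : 0 < K) (z₀ : ℂ)
    (hz₀ : ‖z₀‖ ≤ 1) (hz₀' : z₀ ≠ -1)
    (z : ℝ → ℂ)
    (hz : ∀ t : ℝ, z t =
      ((1 + z₀) * Complex.exp (K * t) - (1 - z₀)) /
      ((1 + z₀) * Complex.exp (K * t) + (1 - z₀))) :
    Filter.Tendsto (fun t => (z t).re) Filter.atTop (nhds 1) ∧
    ∃ T : ℝ, 0 ≤ T ∧ ∀ t : ℝ, T ≤ t → (1 / 2 : ℝ) ≤ (z t).re := by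
  set a : ℂ := 1 + z₀ with ha_def
  set b : ℂ := 1 - z₀ with hb_def
  have ha : a ≠ 0 := by
    intro h
    apply hz₀'
    have : z₀ = -1 := by linear_combination h
    exact this
  -- exp(-(K t)) → 0
  have hE : Tendsto (fun t : ℝ => Complex.exp (-(K * t : ℝ))) atTop (nhds 0) := by
    have h1 : Tendsto (fun t : ℝ => Real.exp (-(K * t))) atTop (nhds 0) := by
      apply Real.tendsto_exp_atBot.comp
      have : Tendsto (fun t : ℝ => K * t) atTop atTop := tendsto_id.const_mul_atTop hK
      exact tendsto_neg_atBot_iff.mpr this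
    have h2 : Tendsto (fun t : ℝ => ((Real.exp (-(K * t)) : ℝ) : ℂ)) atTop (nhds 0) := by
      exact_mod_cast Complex.continuous_ofReal.continuousAt.tendsto.comp h1
    refine h2.congr (fun t => ?_)
    rw [Complex.ofReal_exp, Complex.ofReal_neg]
  have hnum : Tendsto (fun t : ℝ => a - b * Complex.exp (-(K * t : ℝ))) atTop (nhds a) := by
    have := (tendsto_const_nhds (x := b)).mul hE
    simpa using (tendsto_const_nhds (x := a)).sub this
  have hden : Tendsto (fun t : ℝ => a + b * Complex.exp (-(K * t : ℝ))) atTop (nhds a) := by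
    have := (tendsto_const_nhds (x := b)).mul hE
    simpa using (tendsto_const_nhds (x := a)).add this
  have hzt : Tendsto z atTop (nhds 1) := by
    have h := hnum.div hden ha
    rw [div_self ha] at h
    refine h.congr fun t => ?_
    have hEne : Complex.exp ((K : ℂ) * t) ≠ 0 := Complex.exp_ne_zero _
    rw [hz t]
    simp only [Pi.div_apply]
    have hEE : Complex.exp (-((K * t : ℝ) : ℂ)) = (Complex.exp ((K : ℂ) * t))⁻¹ := by
      rw [show (-((K * t : ℝ) : ℂ)) = -((K : ℂ) * t) by push_cast; ring, Complex.exp_neg]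
    rw [hEE]
    set E := Complex.exp ((K : ℂ) * t)
    rw [show a - b * E⁻¹ = (a * E - b) * E⁻¹ by field_simp,
      show a + b * E⁻¹ = (a * E + b) * E⁻¹ by field_simp,
      mul_div_mul_right _ _ (inv_ne_zero hEne)]
  have hre : Tendsto (fun t => (z t).re) atTop (nhds 1) := by
    have : Tendsto Complex.re (nhds (1 : ℂ)) (nhds ((1 : ℂ).re)) :=
      Complex.continuous_re.continuousAt
    have h2 := this.comp hzt
    simp only [Complex.one_re] at h2
    exact h2
  refine ⟨hre, ?_⟩
  have hev : ∀ᶠ t in atTop, (1 / 2 : ℝ) ≤ (z t).re :=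
    hre.eventually (eventually_ge_nhds (by norm_num : (1 / 2 : ℝ) < 1))
  obtain ⟨T, hT⟩ := eventually_atTop.mp hev
  exact ⟨max T 0, le_max_right _ _, fun t ht => hT t ((le_max_left _ _).trans ht)⟩
end
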